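/- arXiv:2409.10860 — 2 statements merged into one kernel-verified Lean document; each statement's English description precedes it below -/
import Mathlib

section
/- Let L ∈ ℝ^{d×d} be symmetric positive semidefinite with rank r < d, let α ∈ ℝ^{d×(d-r)} have orthonormal columns spanning the kernel of L, and let α_⊥ ∈ ℝ^{d×r} have orthonormal columns spanning the column space of L. Then (L + αα')^{-1} L x = α_⊥(α_⊥' L α_⊥)^{-1} α_⊥' L x for every x ∈ ℝ^d. -/
open Matrix

lemma aux_isUnit_of_rank_eq {n : ℕ} (A : Matrix (Fin n) (Fin n) ℝ) (h : A.rank = n) :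
    IsUnit A := by
  rw [← Matrix.mulVec_surjective_iff_isUnit]
  have htop : LinearMap.range A.mulVecLin = ⊤ := by
    apply Submodule.eq_top_of_finrank_eq
    rw [show Module.finrank ℝ (LinearMap.range A.mulVecLin) = A.rank from rfl, h]
    simp
  intro y
  obtain ⟨x, hx⟩ := LinearMap.range_eq_top.mp htop y
  exact ⟨x, hx⟩

theorem stmt4 {d r : ℕ} (hrd : r < d)
    (L : Matrix (Fin d) (Fin d) ℝ)
    (hLsym : Lᵀ = L) (hLpsd : L.PosSemidef) (hLrank : L.rank = r)
    (α : Matrix (Fin d) (Fin (d - r)) ℝ)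
    (hαon : αᵀ * α = 1) (hαker : L * α = 0)
    (αp : Matrix (Fin d) (Fin r) ℝ)
    (hαpon : αpᵀ * αp = 1) (hαpcol : αᵀ * αp = 0) :
    ∀ x : Fin d → ℝ,
      (L + α * αᵀ)⁻¹ *ᵥ (L *ᵥ x) =
        αp *ᵥ ((αpᵀ * L * αp)⁻¹ *ᵥ (αpᵀ *ᵥ (L *ᵥ x))) := by
  set M : Matrix (Fin r) (Fin r) ℝ := αpᵀ * L * αp with hM
  -- basic orthogonality facts
  have hαpα : αpᵀ * α = 0 := by
    have h := congrArg Matrix.transpose hαpcol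
    simpa [Matrix.transpose_mul] using h
  have hαL : αᵀ * L = 0 := by
    have h := congrArg Matrix.transpose hαker
    rw [Matrix.transpose_mul, hLsym] at h
    simpa using h
  have hA0 : α * αᵀ * L = 0 := by rw [Matrix.mul_assoc, hαL, Matrix.mul_zero]
  have hB0 : L * (α * αᵀ) = 0 := by rw [← Matrix.mul_assoc, hαker, Matrix.zero_mul]
  -- completeness: α αᵀ + αp αpᵀ = 1
  have e : Fin d ≃ Fin (d - r) ⊕ Fin r :=
    (finCongr (Nat.sub_add_cancel hrd.le).symm).trans finSumFinEquiv.symm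
  have hQtQ : fromRows αᵀ αpᵀ * fromCols α αp = 1 := by
    rw [Matrix.fromRows_mul_fromCols, hαon, hαpon, hαpα, hαpcol,
      ← Matrix.fromBlocks_one]
  have hsum : α * αᵀ + αp * αpᵀ = 1 := by
    have h := (Matrix.fromCols_mul_fromRows_eq_one_comm e α αp αᵀ αpᵀ).mpr hQtQ
    rwa [Matrix.fromCols_mul_fromRows] at h
  have hαpαpT : αp * αpᵀ = 1 - α * αᵀ := by
    rw [← hsum]; abel
  -- factorization L = αp M αpᵀ
  have hLfact : αp * M * αpᵀ = L := by
    have h1 : αp * M * αpᵀ = (αp * αpᵀ) * L * (αp * αpᵀ) := by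
      simp only [hM, Matrix.mul_assoc]
    rw [h1, hαpαpT]
    simp [sub_mul, mul_sub, hA0, hB0]
  -- rank of M
  have hMrank : M.rank = r := by
    refine le_antisymm (by simpa using M.rank_le_width) ?_
    have h1 : L.rank ≤ (M * αpᵀ).rank := by
      rw [← hLfact, Matrix.mul_assoc]
      exact Matrix.rank_mul_le_right αp (M * αpᵀ)
    have h2 : (M * αpᵀ).rank ≤ M.rank := Matrix.rank_mul_le_left M αpᵀ
    omega
  have hMunit : IsUnit M := aux_isUnit_of_rank_eq M hMrank
  have hMdet : IsUnit M.det := (Matrix.isUnit_iff_isUnit_det M).mp hMunit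
  have hMMinv : M * M⁻¹ = 1 := Matrix.mul_nonsing_inv M hMdet
  -- L αp = αp M
  have hLαp : L * αp = αp * M := by
    calc L * αp = αp * M * αpᵀ * αp := by rw [hLfact]
    _ = αp * M * (αpᵀ * αp) := by rw [Matrix.mul_assoc]
    _ = αp * M := by rw [hαpon, Matrix.mul_one]
  -- right inverse of L + α αᵀ
  have key : (L + α * αᵀ) * (αp * M⁻¹ * αpᵀ + α * αᵀ) = 1 := by
    have h1 : L * (αp * M⁻¹ * αpᵀ) = αp * αpᵀ := by
      calc L * (αp * M⁻¹ * αpᵀ) = (L * αp) * (M⁻¹ * αpᵀ) := by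
            simp only [Matrix.mul_assoc]
      _ = αp * (M * (M⁻¹ * αpᵀ)) := by rw [hLαp, Matrix.mul_assoc]
      _ = αp * αpᵀ := by rw [← Matrix.mul_assoc M, hMMinv, Matrix.one_mul]
    have h2 : (α * αᵀ) * (αp * M⁻¹ * αpᵀ) = 0 := by
      calc (α * αᵀ) * (αp * M⁻¹ * αpᵀ) = α * ((αᵀ * αp) * (M⁻¹ * αpᵀ)) := by
            simp only [Matrix.mul_assoc]
      _ = 0 := by rw [hαpcol, Matrix.zero_mul, Matrix.mul_zero]
    have h3 : (α * αᵀ) * (α * αᵀ) = α * αᵀ := by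
      calc (α * αᵀ) * (α * αᵀ) = α * ((αᵀ * α) * αᵀ) := by simp only [Matrix.mul_assoc]
      _ = α * αᵀ := by rw [hαon, Matrix.one_mul]
    calc (L + α * αᵀ) * (αp * M⁻¹ * αpᵀ + α * αᵀ)
        = L * (αp * M⁻¹ * αpᵀ) + L * (α * αᵀ) + ((α * αᵀ) * (αp * M⁻¹ * αpᵀ)
            + (α * αᵀ) * (α * αᵀ)) := by simp only [add_mul, mul_add]; abel
      _ = αp * αpᵀ + α * αᵀ := by rw [h1, h2, h3, hB0]; simp only [add_zero, zero_add]
      _ = 1 := by rw [← hsum]; abel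
  have hNinv : (L + α * αᵀ)⁻¹ = αp * M⁻¹ * αpᵀ + α * αᵀ := Matrix.inv_eq_right_inv key
  intro x
  rw [hNinv]
  simp [Matrix.add_mulVec, Matrix.mulVec_mulVec, hA0, hαL, add_mul, Matrix.mul_assoc]
end

section
/- Let β, β̂ ∈ ℝ^{d×r} with β'β = β̂'β̂ = I_r. Suppose β_⊥'(β̂ − β) = E₁ and (β̂ − β)'β + β'(β̂ − β) = E₂, where β_⊥ ∈ ℝ^{d×(d-r)} satisfies β'β_⊥ = 0, β_⊥'β_⊥ = I_{d-r}. Then β̂β̂' − ββ' = β E₁' β_⊥' + β_⊥ E₁ β' + R, where the remainder R satisfies ‖R‖_F ≤ ‖β̂ − β‖_F² + ‖E₂‖_F (in particular, if E₁, E₂, and ‖β̂−β‖² are O(1/T), then ββ'-projection error β̂β̂' − ββ' is O(1/T)). -/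
open Matrix

/-- The Frobenius norm of a real matrix. -/
noncomputable def fnorm {m n : Type*} [Fintype m] [Fintype n]
    (M : Matrix m n ℝ) : ℝ :=
  Real.sqrt (∑ i, ∑ j, (M i j) ^ 2)

attribute [local instance] Matrix.frobeniusSeminormedAddCommGroup

lemma fnorm_eq_norm {m n : Type*} [Fintype m] [Fintype n] (M : Matrix m n ℝ) :
    fnorm M = ‖M‖ := by
  rw [Matrix.frobenius_norm_def, fnorm, Real.sqrt_eq_rpow]
  norm_num [Real.norm_eq_abs, sq_abs]

lemma fnorm_sq_eq_trace {m n : Type*} [Fintype m] [Fintype n] (M : Matrix m n ℝ) :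
    ∑ i, ∑ j, (M i j) ^ 2 = (Mᵀ * M).trace := by
  rw [Matrix.trace, Finset.sum_comm]
  simp [Matrix.mul_apply, Matrix.diag, sq]

lemma fnorm_mul_left {m n p : Type*} [Fintype m] [Fintype n] [Fintype p] [DecidableEq n]
    (U : Matrix m n ℝ) (hU : Uᵀ * U = 1) (M : Matrix n p ℝ) :
    fnorm (U * M) = fnorm M := by
  unfold fnorm
  rw [fnorm_sq_eq_trace, fnorm_sq_eq_trace, Matrix.transpose_mul,
    show Mᵀ * Uᵀ * (U * M) = Mᵀ * (Uᵀ * U) * M by simp [Matrix.mul_assoc], hU, Matrix.mul_one]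

lemma fnorm_mul_right {m n p : Type*} [Fintype m] [Fintype n] [Fintype p] [DecidableEq p]
    (V : Matrix n p ℝ) (hV : Vᵀ * V = 1) (M : Matrix m p ℝ) :
    fnorm (M * Vᵀ) = fnorm M := by
  unfold fnorm
  rw [fnorm_sq_eq_trace, fnorm_sq_eq_trace, Matrix.transpose_mul, Matrix.transpose_transpose]
  rw [show V * Mᵀ * (M * Vᵀ) = V * (Mᵀ * M * Vᵀ) by simp [Matrix.mul_assoc],
    Matrix.trace_mul_comm, Matrix.mul_assoc, hV, Matrix.mul_one]

theorem stmt6 {d r : ℕ} (β βh : Matrix (Fin d) (Fin r) ℝ)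
    (hβ : βᵀ * β = 1) (hβh : βhᵀ * βh = 1)
    (βp : Matrix (Fin d) (Fin (d - r)) ℝ)
    (hβp₁ : βᵀ * βp = 0) (hβp₂ : βpᵀ * βp = 1)
    (E₁ : Matrix (Fin (d - r)) (Fin r) ℝ) (E₂ : Matrix (Fin r) (Fin r) ℝ)
    (hE₁ : βpᵀ * (βh - β) = E₁)
    (hE₂ : (βh - β)ᵀ * β + βᵀ * (βh - β) = E₂) :
    fnorm (βh * βhᵀ - β * βᵀ - (β * E₁ᵀ * βpᵀ + βp * E₁ * βᵀ)) ≤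
      (fnorm (βh - β)) ^ 2 + fnorm E₂ := by
  -- r ≤ d
  have hrd : r ≤ d := by
    have h1 : (1 : Matrix (Fin r) (Fin r) ℝ).rank = r := by
      rw [Matrix.rank_one, Fintype.card_fin]
    rw [← hβ] at h1
    have h2 := Matrix.rank_mul_le_right βᵀ β
    have h3 := β.rank_le_card_height
    rw [Fintype.card_fin] at h3
    omega
  -- completeness: β βᵀ + βp βpᵀ = 1
  have hP : β * βᵀ + βp * βpᵀ = 1 := by
    have e : Fin r ⊕ Fin (d - r) ≃ Fin d := finSumFinEquiv.trans (finCongr (by omega))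
    set Q' : Matrix (Fin d) (Fin r ⊕ Fin (d - r)) ℝ := Matrix.fromCols β βp with hQ'
    have hβp₁' : βpᵀ * β = 0 := by
      have := congrArg Matrix.transpose hβp₁
      simpa using this
    have hQQ : Q'ᵀ * Q' = 1 := by
      rw [hQ', Matrix.transpose_fromCols, Matrix.fromRows_mul_fromCols,
        hβ, hβp₂, hβp₁, hβp₁', Matrix.fromBlocks_one]
    have hm := Matrix.submatrix_mul_equiv Q'ᵀ Q' ⇑e.symm (Equiv.refl (Fin d)) ⇑e.symm
    simp only [Equiv.coe_refl] at hm
    have hQ1 : (Q'ᵀ.submatrix ⇑e.symm id) * (Q'.submatrix id ⇑e.symm) = 1 := by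
      rw [hm, hQQ, Matrix.submatrix_one_equiv e.symm]
    have hQ2 : (Q'.submatrix id ⇑e.symm) * (Q'ᵀ.submatrix ⇑e.symm id) = 1 :=
      mul_eq_one_comm.mp hQ1
    rw [Matrix.submatrix_mul_equiv Q' Q'ᵀ id e.symm id] at hQ2
    have hfin : Q' * Q'ᵀ = β * βᵀ + βp * βpᵀ := by
      rw [hQ', Matrix.transpose_fromCols, Matrix.fromCols_mul_fromRows]
    rw [← hfin]
    simpa using hQ2
  have hpp : βp * βpᵀ = 1 - β * βᵀ := by rw [← hP]; abel
  set Δ : Matrix (Fin d) (Fin r) ℝ := βh - β with hΔ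
  have hbh : βh = β + Δ := by rw [hΔ]; abel
  -- key identity
  have key : βh * βhᵀ - β * βᵀ - (β * E₁ᵀ * βpᵀ + βp * E₁ * βᵀ) =
      Δ * Δᵀ + β * E₂ * βᵀ := by
    rw [← hE₁, ← hE₂, hbh]
    have hA : β * (βpᵀ * Δ)ᵀ * βpᵀ = β * Δᵀ - β * (Δᵀ * β) * βᵀ := by
      rw [Matrix.transpose_mul, Matrix.transpose_transpose]
      calc β * (Δᵀ * βp) * βpᵀ = β * (Δᵀ * (βp * βpᵀ)) := by
            simp [Matrix.mul_assoc]
        _ = β * (Δᵀ * (1 - β * βᵀ)) := by rw [hpp]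
        _ = β * Δᵀ - β * (Δᵀ * β) * βᵀ := by
            simp [Matrix.mul_sub, Matrix.mul_assoc]
    have hB : βp * (βpᵀ * Δ) * βᵀ = Δ * βᵀ - β * (βᵀ * Δ) * βᵀ := by
      calc βp * (βpᵀ * Δ) * βᵀ = (βp * βpᵀ) * Δ * βᵀ := by
            simp [Matrix.mul_assoc]
        _ = (1 - β * βᵀ) * Δ * βᵀ := by rw [hpp]
        _ = Δ * βᵀ - β * (βᵀ * Δ) * βᵀ := by
            simp [Matrix.sub_mul, Matrix.mul_assoc]
    rw [hA, hB]
    simp only [Matrix.transpose_add, Matrix.add_mul, Matrix.mul_add]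
    abel
  rw [key]
  have t1 : fnorm (Δ * Δᵀ + β * E₂ * βᵀ) ≤ fnorm (Δ * Δᵀ) + fnorm (β * E₂ * βᵀ) := by
    rw [fnorm_eq_norm, fnorm_eq_norm, fnorm_eq_norm]; exact norm_add_le _ _
  have t2 : fnorm (Δ * Δᵀ) ≤ fnorm Δ ^ 2 := by
    rw [fnorm_eq_norm, fnorm_eq_norm, sq]
    calc ‖Δ * Δᵀ‖ ≤ ‖Δ‖ * ‖Δᵀ‖ := Matrix.frobenius_norm_mul Δ Δᵀ
      _ = ‖Δ‖ * ‖Δ‖ := by rw [Matrix.frobenius_norm_transpose]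
  have t3 : fnorm (β * E₂ * βᵀ) = fnorm E₂ := by
    rw [fnorm_mul_right β hβ (β * E₂), fnorm_mul_left β hβ E₂]
  linarith
end
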